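/- Let M be a right R-module and N a nonsingular right R-module. If M ⊕ N is a SIP-CS module, then for every homomorphism f: M → N, the kernel Ker(f) is a direct summand of M. -/

import Mathlib

universe u v w

section Defs

variable {S : Type u} [Ring S]

/-- A submodule `A` is a direct summand of `M`. -/
def IsDirectSummand {M : Type v} [AddCommGroup M] [Module S M] (A : Submodule S M) : Prop :=
  ∃ B : Submodule S M, A ⊓ B = ⊥ ∧ A ⊔ B = ⊤

/-- `A` is an essential submodule of `B`. -/
def IsEssentialIn {M : Type v} [AddCommGroup M] [Module S M] (A B : Submodule S M) : Prop :=
  A ≤ B ∧ ∀ K : Submodule S M, K ≤ B → K ≠ ⊥ → A ⊓ K ≠ ⊥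

/-- `A` is essential in some direct summand of `M`. -/
def EssentialInSummand {M : Type v} [AddCommGroup M] [Module S M] (A : Submodule S M) : Prop :=
  ∃ D : Submodule S M, IsDirectSummand D ∧ IsEssentialIn A D

/-- `A` is a small (superfluous) submodule of `M`. -/
def IsSmallSubmodule {M : Type v} [AddCommGroup M] [Module S M] (A : Submodule S M) : Prop :=
  ∀ K : Submodule S M, A ⊔ K = ⊤ → K = ⊤

/-- `A` lies above the direct summand `D` of `M`, i.e. `D ≤ A` and `A/D` is small in `M/D`. -/
def LiesAbove {M : Type v} [AddCommGroup M] [Module S M] (A D : Submodule S M) : Prop :=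
  IsDirectSummand D ∧ D ≤ A ∧ IsSmallSubmodule (Submodule.map D.mkQ A)

/-- `A` lies above some direct summand of `M`. -/
def LiesAboveSummand {M : Type v} [AddCommGroup M] [Module S M] (A : Submodule S M) : Prop :=
  ∃ D : Submodule S M, LiesAbove A D

end Defs

section ModDefs

variable (S : Type u) [Ring S]

/-- SSP: the sum of any two direct summands is a direct summand. -/
def HasSSP (M : Type v) [AddCommGroup M] [Module S M] : Prop :=
  ∀ A B : Submodule S M, IsDirectSummand A → IsDirectSummand B → IsDirectSummand (A ⊔ B)

/-- SIP: the intersection of any two direct summands is a direct summand. -/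
def HasSIP (M : Type v) [AddCommGroup M] [Module S M] : Prop :=
  ∀ A B : Submodule S M, IsDirectSummand A → IsDirectSummand B → IsDirectSummand (A ⊓ B)

/-- SIP-CS: the intersection of any finite family of direct summands is essential in a
direct summand. -/
def IsSIPCS (M : Type v) [AddCommGroup M] [Module S M] : Prop :=
  ∀ (ι : Type) [Fintype ι] (A : ι → Submodule S M),
    (∀ i, IsDirectSummand (A i)) → EssentialInSummand (⨅ i, A i)

/-- SSP-lifting: if each member of a finite family of submodules lies above a direct summand,
then their sum lies above a direct summand. -/
def IsSSPLifting (M : Type v) [AddCommGroup M] [Module S M] : Prop :=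
  ∀ (ι : Type) [Fintype ι] (A : ι → Submodule S M),
    (∀ i, LiesAboveSummand (A i)) → LiesAboveSummand (⨆ i, A i)

/-- C2 condition: every submodule isomorphic to a direct summand is a direct summand. -/
def HasC2 (M : Type v) [AddCommGroup M] [Module S M] : Prop :=
  ∀ A B : Submodule S M, IsDirectSummand B → Nonempty (A ≃ₗ[S] B) → IsDirectSummand A

/-- C3 condition: the sum of two direct summands with zero intersection is a direct summand. -/
def HasC3 (M : Type v) [AddCommGroup M] [Module S M] : Prop :=
  ∀ A B : Submodule S M, IsDirectSummand A → IsDirectSummand B → A ⊓ B = ⊥ →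
    IsDirectSummand (A ⊔ B)

/-- D2 condition: if `M/A` is isomorphic to a direct summand of `M` then `A` is a direct
summand. -/
def HasD2 (M : Type v) [AddCommGroup M] [Module S M] : Prop :=
  ∀ A : Submodule S M, (∃ B : Submodule S M, IsDirectSummand B ∧
    Nonempty ((M ⧸ A) ≃ₗ[S] B)) → IsDirectSummand A

/-- D3 condition: if two direct summands sum to `M`, their intersection is a direct summand. -/
def IsD3Module (M : Type v) [AddCommGroup M] [Module S M] : Prop :=
  ∀ A B : Submodule S M, IsDirectSummand A → IsDirectSummand B → A ⊔ B = ⊤ →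
    IsDirectSummand (A ⊓ B)

/-- `M` is relatively CS-Rickart to `N`. -/
def RelCSRickart (M : Type v) (N : Type w) [AddCommGroup M] [Module S M]
    [AddCommGroup N] [Module S N] : Prop :=
  ∀ φ : M →ₗ[S] N, EssentialInSummand (LinearMap.ker φ)

/-- `M` is relatively d-CS-Rickart to `N`. -/
def RelDCSRickart (M : Type v) (N : Type w) [AddCommGroup M] [Module S M]
    [AddCommGroup N] [Module S N] : Prop :=
  ∀ φ : N →ₗ[S] M, LiesAboveSummand (LinearMap.range φ)

/-- CS-Rickart module. -/
def IsCSRickart (M : Type v) [AddCommGroup M] [Module S M] : Prop :=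
  RelCSRickart S M M

/-- d-CS-Rickart module. -/
def IsDCSRickart (M : Type v) [AddCommGroup M] [Module S M] : Prop :=
  RelDCSRickart S M M

/-- `M` has an `Ω`-cover, where `Ω` is the class of modules satisfying `P`. -/
def HasCover (P : ModuleCat.{v} S → Prop) (M : Type v) [AddCommGroup M] [Module S M] : Prop :=
  ∃ (E : ModuleCat.{v} S) (g : E →ₗ[S] M), P E ∧
    (∀ (E' : ModuleCat.{v} S), P E' → ∀ g' : E' →ₗ[S] M,
      ∃ h : E' →ₗ[S] E, g ∘ₗ h = g') ∧
    (∀ h : E →ₗ[S] E, g ∘ₗ h = g → Function.Bijective h)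

/-- `M` has an `Ω`-envelope, where `Ω` is the class of modules satisfying `P`. -/
def HasEnvelope (P : ModuleCat.{v} S → Prop) (M : Type v) [AddCommGroup M] [Module S M] : Prop :=
  ∃ (E : ModuleCat.{v} S) (g : M →ₗ[S] E), P E ∧
    (∀ (E' : ModuleCat.{v} S), P E' → ∀ g' : M →ₗ[S] E',
      ∃ h : E →ₗ[S] E', h ∘ₗ g = g') ∧
    (∀ h : E →ₗ[S] E, h ∘ₗ g = g → Function.Bijective h)

/-- `M` is 2-generated. -/
def TwoGenerated (M : Type v) [AddCommGroup M] [Module S M] : Prop :=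
  ∃ a b : M, Submodule.span S ({a, b} : Set M) = ⊤

/-- `M` is finitely cogenerated. -/
def FinitelyCogenerated (M : Type v) [AddCommGroup M] [Module S M] : Prop :=
  ∀ 𝒜 : Set (Submodule S M), sInf 𝒜 = ⊥ →
    ∃ ℬ ⊆ 𝒜, ℬ.Finite ∧ sInf ℬ = ⊥

/-- The socle of `M`: the sum of all simple submodules. -/
def SocleOf (M : Type v) [AddCommGroup M] [Module S M] : Submodule S M :=
  sSup {A : Submodule S M | IsSimpleModule S ↥A}

/-- An indecomposable module: nonzero, and its only direct summands are `0` and itself. -/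
def IsIndecomposable (M : Type v) [AddCommGroup M] [Module S M] : Prop :=
  (⊤ : Submodule S M) ≠ ⊥ ∧
    ∀ A : Submodule S M, IsDirectSummand A → A = ⊥ ∨ A = ⊤

end ModDefs

section RingDefs

variable (R : Type u) [Ring R]

/-- The right annihilator of an element of a right `R`-module, as a right ideal of `R`. -/
def rightAnnihilator {M : Type v} [AddCommGroup M] [Module Rᵐᵒᵖ M] (m : M) :
    Submodule Rᵐᵒᵖ R where
  carrier := {r : R | MulOpposite.op r • m = 0}
  add_mem' := by
    intro a b ha hb
    simp only [Set.mem_setOf_eq] at *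
    rw [MulOpposite.op_add, add_smul, ha, hb, add_zero]
  zero_mem' := by simp
  smul_mem' := by
    intro c x hx
    simp only [Set.mem_setOf_eq] at *
    have : MulOpposite.op (c • x) = c * MulOpposite.op x := by
      rw [MulOpposite.smul_eq_mul_unop]
      simp [MulOpposite.op_mul]
    rw [this, mul_smul, hx, smul_zero]

/-- `M` is a nonsingular right `R`-module. -/
def IsNonsingular (M : Type v) [AddCommGroup M] [Module Rᵐᵒᵖ M] : Prop :=
  ∀ m : M, IsEssentialIn (rightAnnihilator R m) (⊤ : Submodule Rᵐᵒᵖ R) → m = 0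

/-- `R` is a right V-ring: every simple right `R`-module is injective. -/
def IsRightVRing : Prop :=
  ∀ (N : Type u) [AddCommGroup N] [Module Rᵐᵒᵖ N],
    IsSimpleModule Rᵐᵒᵖ N → Module.Injective Rᵐᵒᵖ N

/-- `R` is semiregular: `R/J(R)` is von Neumann regular and idempotents lift modulo `J(R)`. -/
def IsSemiregularRing : Prop :=
  (∀ a : R, ∃ b : R, a - a * b * a ∈ Ideal.jacobson (⊥ : Ideal R) ∧ b = b * a * b) ∧
  (∀ a : R, a * a - a ∈ Ideal.jacobson (⊥ : Ideal R) →
    ∃ e : R, e * e = e ∧ e - a ∈ Ideal.jacobson (⊥ : Ideal R))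

end RingDefs

/-- if `N` is nonsingular and `M ⊕ N` is SIP-CS, then the kernel of every
homomorphism `M → N` is a direct summand of `M`. -/
theorem statement_16 (R : Type u) [Ring R] (M N : Type v)
    [AddCommGroup M] [Module Rᵐᵒᵖ M] [AddCommGroup N] [Module Rᵐᵒᵖ N]
    (hN : IsNonsingular R N) (h : IsSIPCS Rᵐᵒᵖ (M × N)) (f : M →ₗ[Rᵐᵒᵖ] N) :
    IsDirectSummand (LinearMap.ker f) := by
  classical
  -- the two direct summands of M × N
  set g : (M × N) →ₗ[Rᵐᵒᵖ] N :=
    f.comp (LinearMap.fst Rᵐᵒᵖ M N) - LinearMap.snd Rᵐᵒᵖ M N with hg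
  set K0 : Submodule Rᵐᵒᵖ (M × N) := Submodule.prod (LinearMap.ker f) ⊥ with hK0
  set A : Bool → Submodule Rᵐᵒᵖ (M × N) :=
    fun i => cond i (Submodule.prod ⊤ ⊥) (LinearMap.ker g) with hA
  have hAds : ∀ i, IsDirectSummand (A i) := by
    intro i
    cases i
    · -- graph of f, complement 0 × N
      refine ⟨Submodule.prod ⊥ ⊤, ?_, ?_⟩
      · apply le_antisymm _ bot_le
        rintro ⟨m, n⟩ ⟨h1, h2⟩
        have h1 : g (m, n) = 0 := h1
        obtain ⟨hm, -⟩ := h2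
        simp only [Submodule.mem_bot] at hm
        subst hm
        simp only [hg, LinearMap.sub_apply, LinearMap.comp_apply, LinearMap.fst_apply,
          LinearMap.snd_apply, map_zero, zero_sub, neg_eq_zero] at h1
        subst h1
        rfl
      · apply le_antisymm le_top
        rintro ⟨m, n⟩ -
        rw [Submodule.mem_sup]
        refine ⟨(m, f m), ?_, (0, n - f m), ⟨(Submodule.mem_bot _).2 rfl, trivial⟩, ?_⟩
        · show g (m, f m) = 0
          simp [hg]
        · ext <;> simp
    · -- M × 0, complement 0 × N
      refine ⟨Submodule.prod ⊥ ⊤, ?_, ?_⟩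
      · apply le_antisymm _ bot_le
        rintro ⟨m, n⟩ ⟨⟨-, h2⟩, ⟨h3, -⟩⟩
        simp only [Submodule.mem_bot] at h2 h3
        subst h2; subst h3; rfl
      · apply le_antisymm le_top
        rintro ⟨m, n⟩ -
        rw [Submodule.mem_sup]
        exact ⟨(m, 0), ⟨trivial, rfl⟩, (0, n), ⟨rfl, trivial⟩, by ext <;> simp⟩
  have hinf : (⨅ i, A i) = K0 := by
    rw [iInf_bool_eq]
    ext ⟨m, n⟩
    simp only [hA, cond_true, cond_false, Submodule.mem_inf, Submodule.mem_prod,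
      Submodule.mem_top, Submodule.mem_bot, true_and, LinearMap.mem_ker, hg,
      LinearMap.sub_apply, LinearMap.comp_apply, LinearMap.fst_apply, LinearMap.snd_apply, hK0]
    constructor
    · rintro ⟨hn, hfe⟩
      subst hn
      constructor
      · simpa using hfe
      · rfl
    · rintro ⟨hf0, hn⟩
      subst hn
      simp [hf0]
  obtain ⟨D, hDds, hKle, hessK⟩ := h Bool A hAds
  rw [hinf] at hKle hessK
  -- D = K0
  have hDK : D ≤ K0 := by
    intro x hx
    -- the right ideal I = {r | op r • x ∈ K0}
    let φ : R →ₗ[Rᵐᵒᵖ] (M × N) :=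
      { toFun := fun r => MulOpposite.op r • x
        map_add' := by
          intro a b
          show MulOpposite.op (a + b) • x = MulOpposite.op a • x + MulOpposite.op b • x
          rw [MulOpposite.op_add, add_smul]
        map_smul' := by
          intro s r
          have h1 : s • r = r * s.unop := MulOpposite.smul_eq_mul_unop s r
          show MulOpposite.op (s • r) • x = s • MulOpposite.op r • x
          rw [h1, MulOpposite.op_mul, MulOpposite.op_unop, mul_smul] }
    set I : Submodule Rᵐᵒᵖ R := Submodule.comap φ K0 with hI
    have hφ : ∀ r : R, φ r = MulOpposite.op r • x := fun _ => rfl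
    have hIess : ∀ K : Submodule Rᵐᵒᵖ R, K ≠ ⊥ → I ⊓ K ≠ ⊥ := by
      intro K hKne
      obtain ⟨k, hkK, hk0⟩ := Submodule.ne_bot_iff K |>.1 hKne
      by_cases hk : MulOpposite.op k • x ∈ K0
      · intro hbot
        apply hk0
        have : k ∈ I ⊓ K := ⟨hk, hkK⟩
        rw [hbot] at this
        exact this
      · -- y = op k • x is a nonzero element of D
        set y : M × N := MulOpposite.op k • x with hy
        have hyD : y ∈ D := D.smul_mem _ hx
        have hy0 : y ≠ 0 := by
          intro h0
          exact hk (h0 ▸ K0.zero_mem)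
        have hC : Submodule.span Rᵐᵒᵖ {y} ≠ ⊥ := by
          intro hb
          apply hy0
          have : y ∈ Submodule.span Rᵐᵒᵖ {y} := Submodule.mem_span_singleton_self y
          rw [hb] at this
          exact this
        have := hessK (Submodule.span Rᵐᵒᵖ {y})
          ((Submodule.span_singleton_le_iff_mem y D).2 hyD) hC
        obtain ⟨z, ⟨hzK0, hzC⟩, hz0⟩ := Submodule.ne_bot_iff _ |>.1 this
        obtain ⟨s, hs⟩ := Submodule.mem_span_singleton.1 hzC
        set r : R := k * s.unop with hr
        have hrz : MulOpposite.op r • x = z := by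
          rw [hr, MulOpposite.op_mul, MulOpposite.op_unop, mul_smul, ← hy, hs]
        intro hbot
        apply hz0
        have hrI : r ∈ I := by
          rw [hI, Submodule.mem_comap, hφ, hrz]
          exact hzK0
        have hrK : r ∈ K := by
          have : s • k = k * s.unop := MulOpposite.smul_eq_mul_unop s k
          rw [hr, ← this]
          exact K.smul_mem _ hkK
        have : r ∈ I ⊓ K := ⟨hrI, hrK⟩
        rw [hbot, Submodule.mem_bot] at this
        rw [← hrz, this, MulOpposite.op_zero, zero_smul]
    -- I ≤ annihilators
    have hIann2 : I ≤ rightAnnihilator R x.2 := by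
      intro r hrI
      rw [hI, Submodule.mem_comap, hφ] at hrI
      obtain ⟨-, h2⟩ := hrI
      show MulOpposite.op r • x.2 = 0
      simpa using h2
    have hIann1 : I ≤ rightAnnihilator R (f x.1) := by
      intro r hrI
      rw [hI, Submodule.mem_comap, hφ] at hrI
      obtain ⟨h1, -⟩ := hrI
      show MulOpposite.op r • f x.1 = 0
      rw [← map_smul]
      exact LinearMap.mem_ker.1 h1
    have hann : ∀ (n : N), I ≤ rightAnnihilator R n → n = 0 := by
      intro n hle
      apply hN
      refine ⟨le_top, fun K _ hKne hbot => hIess K hKne ?_⟩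
      apply le_antisymm _ bot_le
      calc I ⊓ K ≤ rightAnnihilator R n ⊓ K := inf_le_inf_right K hle
        _ = ⊥ := hbot
    have h2 : x.2 = 0 := hann _ hIann2
    have h1 : f x.1 = 0 := hann _ hIann1
    exact ⟨LinearMap.mem_ker.2 h1, h2⟩
  have hDeq : D = K0 := le_antisymm hDK hKle
  -- extract: K0 = ker f × 0 is a direct summand of M × N, hence ker f of M
  obtain ⟨D', hDD'1, hDD'2⟩ := hDds
  rw [hDeq] at hDD'1 hDD'2
  set B : Submodule Rᵐᵒᵖ M :=
    Submodule.map (LinearMap.fst Rᵐᵒᵖ M N) (D' ⊓ Submodule.prod ⊤ ⊥) with hB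
  refine ⟨B, ?_, ?_⟩
  · apply le_antisymm _ bot_le
    rintro m ⟨hmker, hmB⟩
    obtain ⟨⟨w1, w2⟩, ⟨hwD', ⟨-, hw2⟩⟩, hw1⟩ := hmB
    simp only [Submodule.mem_bot] at hw2
    simp only [LinearMap.fst_apply] at hw1
    subst hw1; subst hw2
    have hwK0 : (w1, (0 : N)) ∈ K0 := ⟨hmker, rfl⟩
    have : (w1, (0 : N)) ∈ K0 ⊓ D' := ⟨hwK0, hwD'⟩
    rw [hDD'1, Submodule.mem_bot] at this
    rw [Submodule.mem_bot]
    exact congrArg Prod.fst this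
  · apply le_antisymm le_top
    intro m _
    have hM0 : (Submodule.prod (⊤ : Submodule Rᵐᵒᵖ M) (⊥ : Submodule Rᵐᵒᵖ N)) =
        K0 ⊔ (D' ⊓ Submodule.prod ⊤ ⊥) := by
      have hK0le : K0 ≤ Submodule.prod ⊤ ⊥ := by
        rintro ⟨a, b⟩ ⟨-, hb⟩
        exact ⟨trivial, hb⟩
      calc Submodule.prod (⊤ : Submodule Rᵐᵒᵖ M) (⊥ : Submodule Rᵐᵒᵖ N)
          = ⊤ ⊓ Submodule.prod ⊤ ⊥ := (top_inf_eq _).symm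
        _ = (K0 ⊔ D') ⊓ Submodule.prod ⊤ ⊥ := by rw [hDD'2]
        _ = K0 ⊔ (D' ⊓ Submodule.prod ⊤ ⊥) := sup_inf_assoc_of_le _ hK0le
    have hm : ((m, 0) : M × N) ∈ K0 ⊔ (D' ⊓ Submodule.prod ⊤ ⊥) := by
      rw [← hM0]; exact ⟨trivial, rfl⟩
    obtain ⟨d, hd, d', hd', hdd'⟩ := Submodule.mem_sup.1 hm
    rw [Submodule.mem_sup]
    refine ⟨d.1, hd.1, d'.1, ⟨d', hd', rfl⟩, ?_⟩
    exact congrArg Prod.fst hdd'
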